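/- Let G be a finite group, H ≤ G a subgroup, σ an irreducible unitary representation of G with character χ^σ, and suppose the restriction to H of the adjoint representation σ' decomposes as Res^G_H σ' = ρ_1 ⊕ ρ_2 ⊕ ⋯ ⊕ ρ_m with ρ_1,…,ρ_m pairwise inequivalent irreducible representations of H (equivalently, the character of Res^G_H σ' equals χ^{ρ_1}+⋯+χ^{ρ_m}). Set ρ = ρ_1 with dimension d_ρ and character χ^ρ. Then the generalized character φ_{σ,ρ} satisfies φ_{σ,ρ}(h) = (1/d_ρ) χ^ρ(h) for every h ∈ H. -/

import Mathlib

open CategoryTheory Module Polynomial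

noncomputable section

namespace GenCharAux

variable {V : Type} [AddCommGroup V] [Module ℂ V] [FiniteDimensional ℂ V]

lemma conj_trace_of_pow_eq_one {f g : V →ₗ[ℂ] V} {n : ℕ} (hn : n ≠ 0)
    (hf : f ^ n = 1) (hfg : g * f = 1) :
    (starRingEnd ℂ) (LinearMap.trace ℂ V f) = LinearMap.trace ℂ V g := by
  have hsq : Squarefree (X ^ n - C (1 : ℂ)) :=
    (Polynomial.separable_X_pow_sub_C (1 : ℂ)
      (by exact_mod_cast (Nat.cast_ne_zero (R := ℂ)).mpr hn) one_ne_zero).squarefree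
  have haev : aeval f (X ^ n - C (1 : ℂ)) = 0 := by
    simp [map_sub, map_pow, hf]
  have hss := Module.End.isSemisimple_of_squarefree_aeval_eq_zero (f := (f : Module.End ℂ V)) hsq haev
  have hfin := hss.isFinitelySemisimple
  have htop : (⨆ μ : ℂ, Module.End.eigenspace f μ) = ⊤ := by
    have h1 := Module.End.iSup_maxGenEigenspace_eq_top (K := ℂ) (V := V) f
    simpa only [hfin.maxGenEigenspace_eq_eigenspace] using h1
  have hind : iSupIndep (Module.End.eigenspace f) :=
    Module.End.independent_genEigenspace f 1
  have hint : DirectSum.IsInternal (fun μ : ℂ => Module.End.eigenspace f μ) :=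
    DirectSum.isInternal_submodule_of_iSupIndep_of_iSup_eq_top hind htop
  let b := hint.collectedBasis (fun μ => Module.finBasis ℂ (Module.End.eigenspace f μ))
  letI : Fintype (Σ μ : ℂ, Fin (finrank ℂ (Module.End.eigenspace f μ))) :=
    IsNoetherian.fintypeBasisIndex b
  have hb : ∀ i, f (b i) = i.1 • b i := fun i =>
    Module.End.mem_eigenspace_iff.mp (hint.collectedBasis_mem _ i)
  have hpowk : ∀ i, ∀ k : ℕ, (f ^ k) (b i) = i.1 ^ k • b i := by
    intro i k
    induction k with
    | zero => simp
    | succ k ih =>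
      rw [pow_succ, Module.End.mul_apply, hb, map_smul, ih, smul_smul, ← pow_succ']
  have hpow : ∀ i : (Σ μ : ℂ, Fin (finrank ℂ (Module.End.eigenspace f μ))), i.1 ^ n = 1 := by
    intro i
    have h2 := hpowk i n
    rw [hf] at h2
    have h3 : (i.1 ^ n - 1) • b i = 0 := by
      rw [sub_smul, one_smul, ← h2, Module.End.one_apply, sub_self]
    rcases smul_eq_zero.mp h3 with h | h
    · exact sub_eq_zero.mp h
    · exact absurd h (b.ne_zero i)
  have hne : ∀ i : (Σ μ : ℂ, Fin (finrank ℂ (Module.End.eigenspace f μ))), (i.1 : ℂ) ≠ 0 := by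
    intro i h
    have := hpow i
    rw [h, zero_pow hn] at this
    exact zero_ne_one this
  have hconj : ∀ i : (Σ μ : ℂ, Fin (finrank ℂ (Module.End.eigenspace f μ))), (starRingEnd ℂ) i.1 = (i.1)⁻¹ := by
    intro i
    have habs : ‖i.1‖ = 1 := by
      have h1 : ‖i.1‖ ^ n = 1 := by
        rw [← norm_pow, hpow i, norm_one]
      rcases (pow_eq_one_iff_cases).mp h1 with h | h | h
      · exact absurd h hn
      · exact h
      · nlinarith [norm_nonneg i.1, h.1]
    have hmul : i.1 * (starRingEnd ℂ) i.1 = 1 := by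
      rw [Complex.mul_conj, Complex.normSq_eq_norm_sq, habs]
      norm_num
    exact (inv_eq_of_mul_eq_one_right hmul).symm
  have hg : ∀ i : (Σ μ : ℂ, Fin (finrank ℂ (Module.End.eigenspace f μ))), g (b i) = (i.1)⁻¹ • b i := by
    intro i
    have h1 : g (f (b i)) = b i := by
      rw [← Module.End.mul_apply, hfg, Module.End.one_apply]
    rw [hb i, map_smul] at h1
    rw [eq_inv_smul_iff₀ (hne i)]
    exact h1
  have htr : ∀ (S : V →ₗ[ℂ] V) (μ : (Σ μ : ℂ, Fin (finrank ℂ (Module.End.eigenspace f μ))) → ℂ),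
      (∀ i, S (b i) = μ i • b i) → LinearMap.trace ℂ V S = ∑ i, μ i := by
    intro S μ hS
    rw [LinearMap.trace_eq_matrix_trace ℂ b S, Matrix.trace]
    refine Finset.sum_congr rfl fun i _ => ?_
    rw [Matrix.diag_apply, LinearMap.toMatrix_apply, hS, map_smul, b.repr_self]
    simp
  rw [htr f (fun i => i.1) hb, htr g (fun i => (i.1)⁻¹) hg, map_sum]
  exact Finset.sum_congr rfl fun i _ => hconj i


lemma conj_char {G : Type} [Group G] [Fintype G] (V : FDRep ℂ G) (g : G) :
    (starRingEnd ℂ) (V.character g) = V.character g⁻¹ := by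
  apply conj_trace_of_pow_eq_one (n := orderOf g) (orderOf_pos g).ne'
  · rw [← map_pow, pow_orderOf_eq_one, map_one]
  · rw [← map_mul, inv_mul_cancel, map_one]

open scoped Classical in
lemma conv_char {G : Type} [Group G] [Fintype G] (V W : FDRep ℂ G) [Simple V] [Simple W] (g : G) :
    (Fintype.card G : ℂ)⁻¹ * ∑ x : G, V.character (g * x) * W.character x⁻¹ =
      if Nonempty (V ≅ W) then (finrank ℂ V : ℂ)⁻¹ * V.character g else 0 := by
  classical
  have hcard : (Fintype.card G : ℂ) ≠ 0 := by
    exact_mod_cast Fintype.card_ne_zero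
  letI : Invertible (Fintype.card G : ℂ) := invertibleOfNonzero hcard
  -- the averaged operator
  set T : V →ₗ[ℂ] V :=
    (Fintype.card G : ℂ)⁻¹ • ∑ x : G, W.character x⁻¹ • (V.ρ x : V →ₗ[ℂ] V) with hTdef
  have hcomm : ∀ s : G, (V.ρ s : V →ₗ[ℂ] V) * T = T * V.ρ s := by
    intro s
    rw [hTdef, Algebra.mul_smul_comm, Algebra.smul_mul_assoc, Finset.mul_sum, Finset.sum_mul]
    congr 1
    refine Fintype.sum_equiv ((Equiv.mulLeft s).trans (Equiv.mulRight s⁻¹)) _ _ ?_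
    intro x
    simp only [Equiv.trans_apply, Equiv.coe_mulLeft, Equiv.coe_mulRight]
    rw [Algebra.mul_smul_comm, Algebra.smul_mul_assoc, ← map_mul, ← map_mul]
    have h1 : s * x * s⁻¹ * s = s * x := by group
    have h2 : W.character (s * x * s⁻¹)⁻¹ = W.character x⁻¹ := by
      rw [← FDRep.char_conj W x⁻¹ s]
      congr 1
      group
    rw [h1, h2]
  -- T as a morphism in FDRep
  let Tm : V ⟶ V := ⟨InducedCategory.homMk (ModuleCat.ofHom T), fun s => by
    ext v; exact LinearMap.congr_fun (hcomm s).symm v⟩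
  obtain ⟨c, hc⟩ := CategoryTheory.endomorphism_simple_eq_smul_id (𝕜 := ℂ) Tm
  have hThom : T = c • LinearMap.id := by
    have := congrArg (fun φ : V ⟶ V => φ.hom.hom.hom) hc
    exact this.symm
  -- dimension is nonzero
  have hd0 : finrank ℂ V ≠ 0 := by
    intro h
    have hsub : Subsingleton V := (Module.finrank_zero_iff (R := ℂ)).mp h
    refine CategoryTheory.id_nonzero V ?_
    apply Action.Hom.ext
    ext v; exact @Subsingleton.elim _ hsub _ _
  have hd : (finrank ℂ V : ℂ) ≠ 0 := by exact_mod_cast hd0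
  -- trace of T is given by orthogonality of characters
  have horth0 := FDRep.char_orthonormal (k := ℂ) (G := G) V W
  rw [Nat.card_eq_fintype_card] at horth0
  have horth : (Fintype.card G : ℂ)⁻¹ • ∑ x : G, V.character x * W.character x⁻¹ =
      if Nonempty (V ≅ W) then 1 else 0 := by rw [smul_eq_mul]; exact_mod_cast horth0
  have htrT : LinearMap.trace ℂ V T = if Nonempty (V ≅ W) then 1 else 0 := by
    rw [hTdef, map_smul, map_sum]
    rw [← horth, smul_eq_mul, smul_eq_mul]
    congr 1
    refine Finset.sum_congr rfl fun x _ => ?_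
    rw [map_smul, smul_eq_mul, mul_comm]
    rfl
  -- trace of T in terms of the scalar c
  have htrT' : LinearMap.trace ℂ V T = c * finrank ℂ V := by
    rw [hThom, map_smul, LinearMap.trace_id, smul_eq_mul]
  -- the left hand side equals the trace of `ρ g * T`
  have hlhs : (Fintype.card G : ℂ)⁻¹ * ∑ x : G, V.character (g * x) * W.character x⁻¹ =
      LinearMap.trace ℂ V ((V.ρ g : V →ₗ[ℂ] V) * T) := by
    have hexp : (V.ρ g : V →ₗ[ℂ] V) * T =
        (Fintype.card G : ℂ)⁻¹ • ∑ x : G, W.character x⁻¹ • (V.ρ (g * x) : V →ₗ[ℂ] V) := by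
      rw [hTdef, Algebra.mul_smul_comm, Finset.mul_sum]
      congr 1
      refine Finset.sum_congr rfl fun x _ => ?_
      rw [Algebra.mul_smul_comm, ← map_mul]
    rw [hexp, map_smul, map_sum, smul_eq_mul]
    congr 1
    refine Finset.sum_congr rfl fun x _ => ?_
    rw [map_smul, smul_eq_mul, mul_comm]
    rfl
  rw [hlhs, hThom]
  have : (V.ρ g : V →ₗ[ℂ] V) * (c • LinearMap.id) = c • (V.ρ g : V →ₗ[ℂ] V) := by
    rw [Algebra.mul_smul_comm, Module.End.mul_eq_comp, LinearMap.comp_id]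
  rw [this, map_smul, smul_eq_mul]
  have hchar : LinearMap.trace ℂ V ((V.ρ g : V →ₗ[ℂ] V)) = V.character g := rfl
  rw [hchar]
  have hc' : c * (finrank ℂ V : ℂ) = if Nonempty (V ≅ W) then 1 else 0 := by
    rw [← htrT', htrT]
  by_cases hiso : Nonempty (V ≅ W)
  · rw [if_pos hiso] at hc' ⊢
    rw [eq_inv_of_mul_eq_one_left hc']
  · rw [if_neg hiso] at hc' ⊢
    have : c = 0 := by
      rcases mul_eq_zero.mp hc' with h | h
      · exact h
      · exact absurd h hd
    rw [this, zero_mul]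


end GenCharAux

end

open FDRep CategoryTheory

/-- Let `G` be a finite group, `H ≤ G`, `V = σ` an irreducible complex
representation of `G`, and suppose that the restriction to `H` of the adjoint (dual)
representation `σ'` (whose character is `g ↦ χ^σ(g⁻¹)`) decomposes as `ρ 0 ⊕ ⋯ ⊕ ρ (m-1)` with
the `ρ i` pairwise inequivalent irreducible representations of `H` (expressed at the level of
characters).  Then the generalized character
`φ_{σ,ρ}(g) = (1/|H|) ∑_{x ∈ H} conj(χ^σ(g x)) conj(χ^ρ(x))`, with `ρ = ρ 0`, satisfies
`φ_{σ,ρ}(h) = (1/d_ρ) χ^ρ(h)` for every `h ∈ H`. -/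
theorem generalized_character_on_subgroup
    {G : Type} [Group G] [Fintype G] (H : Subgroup G) [Fintype H]
    (V : FDRep ℂ G) [Simple V]
    (m : ℕ) (hm : 0 < m) (ρ : Fin m → FDRep ℂ H) [∀ i, Simple (ρ i)]
    (hpairwise : ∀ i j : Fin m, i ≠ j → IsEmpty (ρ i ≅ ρ j))
    (hres : ∀ h : H, V.character ((h : G)⁻¹) = ∑ i : Fin m, (ρ i).character h) :
    ∀ h : H,
      (Fintype.card H : ℂ)⁻¹ *
          ∑ x : H, (starRingEnd ℂ) (V.character ((h : G) * (x : G))) *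
            (starRingEnd ℂ) ((ρ ⟨0, hm⟩).character x) =
        (Module.finrank ℂ (ρ ⟨0, hm⟩) : ℂ)⁻¹ * (ρ ⟨0, hm⟩).character h := by
  classical
  intro h
  have key : ∀ x : H, (starRingEnd ℂ) (V.character ((h : G) * (x : G))) =
      ∑ i : Fin m, (ρ i).character (h * x) := by
    intro x
    rw [← Subgroup.coe_mul, GenCharAux.conj_char V (((h * x : H) : G))]
    exact hres (h * x)
  have key2 : ∀ x : H, (starRingEnd ℂ) ((ρ ⟨0, hm⟩).character x) =
      (ρ ⟨0, hm⟩).character x⁻¹ := fun x => GenCharAux.conj_char _ x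
  have step1 : ∑ x : H, (starRingEnd ℂ) (V.character ((h : G) * (x : G))) *
        (starRingEnd ℂ) ((ρ ⟨0, hm⟩).character x) =
      ∑ i : Fin m, ∑ x : H, (ρ i).character (h * x) * (ρ ⟨0, hm⟩).character x⁻¹ := by
    rw [show (∑ x : H, (starRingEnd ℂ) (V.character ((h : G) * (x : G))) *
        (starRingEnd ℂ) ((ρ ⟨0, hm⟩).character x)) =
        ∑ x : H, ∑ i : Fin m, (ρ i).character (h * x) * (ρ ⟨0, hm⟩).character x⁻¹ from
      Finset.sum_congr rfl fun x _ => by rw [key x, key2 x, Finset.sum_mul]]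
    exact Finset.sum_comm
  rw [step1, Finset.mul_sum]
  have step2 : ∀ i : Fin m,
      (Fintype.card H : ℂ)⁻¹ * ∑ x : H, (ρ i).character (h * x) * (ρ ⟨0, hm⟩).character x⁻¹ =
        if Nonempty (ρ i ≅ ρ ⟨0, hm⟩) then
          (Module.finrank ℂ (ρ i) : ℂ)⁻¹ * (ρ i).character h else 0 :=
    fun i => GenCharAux.conv_char (ρ i) (ρ ⟨0, hm⟩) h
  rw [Finset.sum_congr rfl fun i _ => step2 i]
  rw [Finset.sum_eq_single (⟨0, hm⟩ : Fin m)]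
  · rw [if_pos ⟨Iso.refl _⟩]
  · intro i _ hne
    rw [if_neg (not_nonempty_iff.mpr (hpairwise i ⟨0, hm⟩ hne))]
  · intro habs
    exact absurd (Finset.mem_univ _) habs
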